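/- arXiv:1209.0414 — 2 statements merged into one kernel-verified Lean document; each statement's English description precedes it below -/
import Mathlib

section
/- Let A be the 2-degenerate 3-computad with three 2-cells a₁,a₂,a₃ and one 3-cell f with source a₁·a₂ and target a₃, and let B be an isomorphic copy with 2-cells b₁,b₂,b₃ and one 3-cell g with source b₁·b₂ and target b₃. Then the categorical product A × B in the category of 2-degenerate 3-computads has nine 2-cells (aᵢ,bⱼ) and exactly two 3-cells: one with source (a₁,b₁)·(a₂,b₂) and one with source (a₂,b₁)·(a₁,b₂), both with target (a₃,b₃). -/
open CategoryTheory

/-- A 2-degenerate 3-computad: a single 0-cell, no 1-cells, so the data is a set of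
2-cells, a set of 3-cells, and boundary maps into the free commutative monoid
(multisets) on the 2-cells. -/
structure DegComputad where
  C2 : Type
  C3 : Type
  src : C3 → Multiset C2
  tgt : C3 → Multiset C2

/-- Morphisms of 2-degenerate 3-computads. -/
@[ext]
structure DegComputad.Hom (A B : DegComputad) where
  f2 : A.C2 → B.C2
  f3 : A.C3 → B.C3
  src_comm : ∀ e, B.src (f3 e) = Multiset.map f2 (A.src e)
  tgt_comm : ∀ e, B.tgt (f3 e) = Multiset.map f2 (A.tgt e)

instance : Category DegComputad where
  Hom := DegComputad.Hom
  id A := ⟨id, id, by simp, by simp⟩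
  comp f g := ⟨g.f2 ∘ f.f2, g.f3 ∘ f.f3,
    by intro e; simp [f.src_comm, g.src_comm, Multiset.map_map],
    by intro e; simp [f.tgt_comm, g.tgt_comm, Multiset.map_map]⟩

@[simp] lemma DegComputad.id_f2 (A : DegComputad) : (𝟙 A : A ⟶ A).f2 = id := rfl
@[simp] lemma DegComputad.id_f3 (A : DegComputad) : (𝟙 A : A ⟶ A).f3 = id := rfl
@[simp] lemma DegComputad.comp_f2 {A B C : DegComputad} (f : A ⟶ B) (g : B ⟶ C) :
    (f ≫ g).f2 = g.f2 ∘ f.f2 := rfl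
@[simp] lemma DegComputad.comp_f3 {A B C : DegComputad} (f : A ⟶ B) (g : B ⟶ C) :
    (f ≫ g).f3 = g.f3 ∘ f.f3 := rfl
/-- The computad `A`: 2-cells `a₁,a₂,a₃` (as `0,1,2`), one 3-cell `f : a₁·a₂ → a₃`. -/
abbrev CompA : DegComputad := ⟨Fin 3, Unit, fun _ => {0, 1}, fun _ => {2}⟩

/-- The computad `B`: an isomorphic copy of `A`, with 2-cells `b₁,b₂,b₃` and
one 3-cell `g : b₁·b₂ → b₃`. -/
abbrev CompB : DegComputad := ⟨Fin 3, Unit, fun _ => {0, 1}, fun _ => {2}⟩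

/-- The putative product `A × B`: nine 2-cells `(aᵢ,bⱼ)` and two 3-cells
`(f,g)₁ : (a₁,b₁)·(a₂,b₂) → (a₃,b₃)` and `(f,g)₂ : (a₂,b₁)·(a₁,b₂) → (a₃,b₃)`. -/
abbrev CompAB : DegComputad :=
  ⟨Fin 3 × Fin 3, Fin 2,
   fun e => if e = 0 then {((0 : Fin 3), (0 : Fin 3)), (1, 1)} else {(1, 0), (0, 1)},
   fun _ => {(2, 2)}⟩

/-- First projection `A × B ⟶ A`. -/
def projA : CompAB ⟶ CompA :=
  ⟨Prod.fst, fun _ => (), by decide, by decide⟩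

/-- Second projection `A × B ⟶ B`. -/
def projB : CompAB ⟶ CompB :=
  ⟨Prod.snd, fun _ => (), by decide, by decide⟩

open CategoryTheory.Limits

lemma src_classify (M : Multiset (Fin 3 × Fin 3))
    (h1 : M.map Prod.fst = {0, 1}) (h2 : M.map Prod.snd = {0, 1}) :
    M = {(0, 0), (1, 1)} ∨ M = {(1, 0), (0, 1)} := by
  have hc : M.card = 2 := by
    have := congrArg Multiset.card h1
    simpa using this
  obtain ⟨u, v, rfl⟩ := Multiset.card_eq_two.mp hc
  clear hc
  simp only [Multiset.insert_eq_cons, Multiset.map_cons, Multiset.map_singleton] at h1 h2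
  revert h1 h2; revert u v; decide

lemma tgt_classify (M : Multiset (Fin 3 × Fin 3))
    (h1 : M.map Prod.fst = {2}) (h2 : M.map Prod.snd = {2}) :
    M = {(2, 2)} := by
  have hc : M.card = 1 := by
    have := congrArg Multiset.card h1
    simpa using this
  obtain ⟨u, rfl⟩ := Multiset.card_eq_one.mp hc
  clear hc
  simp only [Multiset.map_singleton] at h1 h2
  revert h1 h2; revert u; decide

/-- The pairing map into the product. -/
def liftHom {T : DegComputad} (p : T ⟶ CompA) (q : T ⟶ CompB) : T ⟶ CompAB where
  f2 := fun t => (p.f2 t, q.f2 t)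
  f3 := fun e => if (T.src e).map (fun t => (p.f2 t, q.f2 t)) =
      ({(0, 0), (1, 1)} : Multiset (Fin 3 × Fin 3)) then 0 else 1
  src_comm := by
    intro e
    have h1 : ((T.src e).map (fun t => (p.f2 t, q.f2 t))).map Prod.fst = {0, 1} := by
      rw [Multiset.map_map]; exact (p.src_comm e).symm
    have h2 : ((T.src e).map (fun t => (p.f2 t, q.f2 t))).map Prod.snd = {0, 1} := by
      rw [Multiset.map_map]; exact (q.src_comm e).symm
    dsimp only
    rcases src_classify _ h1 h2 with h | h <;> simp only [h] <;> decide
  tgt_comm := by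
    intro e
    have h1 : ((T.tgt e).map (fun t => (p.f2 t, q.f2 t))).map Prod.fst = {2} := by
      rw [Multiset.map_map]; exact (p.tgt_comm e).symm
    have h2 : ((T.tgt e).map (fun t => (p.f2 t, q.f2 t))).map Prod.snd = {2} := by
      rw [Multiset.map_map]; exact (q.tgt_comm e).symm
    dsimp only
    rw [tgt_classify _ h1 h2]

lemma liftHom_uniq {T : DegComputad} (p : T ⟶ CompA) (q : T ⟶ CompB)
    (m : T ⟶ CompAB) (h1 : m ≫ projA = p) (h2 : m ≫ projB = q) :
    m = liftHom p q := by
  have hf2 : m.f2 = fun t => (p.f2 t, q.f2 t) := by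
    funext t
    have e1 : (m ≫ projA).f2 t = p.f2 t := by rw [h1]
    have e2 : (m ≫ projB).f2 t = q.f2 t := by rw [h2]
    exact Prod.ext e1 e2
  apply DegComputad.Hom.ext
  · exact hf2
  · funext e
    have hsrc := m.src_comm e
    rw [hf2] at hsrc
    show m.f3 e = if (T.src e).map (fun t => (p.f2 t, q.f2 t)) =
        ({(0, 0), (1, 1)} : Multiset (Fin 3 × Fin 3)) then 0 else 1
    have htwo : ∀ x : Fin 2, x = 0 ∨ x = 1 := by decide
    obtain h | h := htwo (m.f3 e)
    · rw [h] at hsrc ⊢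
      have hs : CompAB.src 0 = {(0, 0), (1, 1)} := rfl
      rw [hs] at hsrc
      rw [← hsrc]
      decide
    · rw [h] at hsrc ⊢
      have hs : CompAB.src 1 = {(1, 0), (0, 1)} := rfl
      rw [hs] at hsrc
      rw [← hsrc]
      decide

/-- With `A` and `B` the computads with three 2-cells and one 3-cell
(`f : a₁·a₂ → a₃`, resp. `g : b₁·b₂ → b₃`), the explicitly described computad
`CompAB` — nine 2-cells `(aᵢ,bⱼ)` and exactly two 3-cells, one with source
`(a₁,b₁)·(a₂,b₂)` and one with source `(a₂,b₁)·(a₁,b₂)`, both with target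
`(a₃,b₃)` — together with the evident projections, is a categorical product
of `A` and `B` in the category of 2-degenerate 3-computads. -/
theorem stmt3 : Nonempty (IsLimit (BinaryFan.mk projA projB)) := by
  constructor
  refine BinaryFan.isLimitMk (fun s => liftHom s.fst s.snd) (fun s => ?_) (fun s => ?_)
    (fun s m h1 h2 => liftHom_uniq s.fst s.snd m h1 h2)
  · apply DegComputad.Hom.ext
    · rfl
    · funext e; rfl
  · apply DegComputad.Hom.ext
    · rfl
    · funext e; rfl
end

section
/- With the data above, the canonical comparison morphism P → C × B from the coequalizer of α₁ × id_B and α₂ × id_B to the product of the coequalizer C with B is not an isomorphism: it identifies the two distinct 3-cells of P. -/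
open CategoryTheory

/-- The computad `E`: two 2-cells `x,y` (as `0,1`) and no 3-cells. -/
abbrev CompE : DegComputad := ⟨Fin 2, Empty, fun e => e.elim, fun e => e.elim⟩

/-- The morphism `α₁ : E ⟶ A`, `x ↦ a₁`, `y ↦ a₃`. -/
def alpha1 : CompE ⟶ CompA := ⟨![0, 2], fun e => e.elim, fun e => e.elim, fun e => e.elim⟩

/-- The morphism `α₂ : E ⟶ A`, `x ↦ a₂`, `y ↦ a₃`. -/
def alpha2 : CompE ⟶ CompA := ⟨![1, 2], fun e => e.elim, fun e => e.elim, fun e => e.elim⟩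

/-- The coequalizer `C` of `α₁, α₂`: two 2-cells `ā, a₃` (as `0,1`) and one 3-cell
`f̄ : ā·ā → a₃`. -/
abbrev CompC : DegComputad := ⟨Fin 2, Unit, fun _ => {0, 0}, fun _ => {1}⟩

/-- The quotient morphism `A ⟶ C`, identifying `a₁` and `a₂`. -/
def qmap : CompA ⟶ CompC := ⟨![0, 0, 1], fun _ => (), by decide, by decide⟩

/-- The product `E × B`: 2-cells `(x,bⱼ)`, `(y,bⱼ)`, and no 3-cells. -/
abbrev CompEB : DegComputad := ⟨Fin 2 × Fin 3, Empty, fun e => e.elim, fun e => e.elim⟩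

/-- The morphism `α₁ × id_B : E × B ⟶ A × B`. -/
def alpha1B : CompEB ⟶ CompAB :=
  ⟨Prod.map ![0, 2] id, fun e => e.elim, fun e => e.elim, fun e => e.elim⟩

/-- The morphism `α₂ × id_B : E × B ⟶ A × B`. -/
def alpha2B : CompEB ⟶ CompAB :=
  ⟨Prod.map ![1, 2] id, fun e => e.elim, fun e => e.elim, fun e => e.elim⟩

/-- The coequalizer `P` of `α₁ × 1, α₂ × 1`: 2-cells `(ā,bⱼ)`, `(a₃,bⱼ)` and two
3-cells, both with source `(ā,b₁)·(ā,b₂)` and target `(a₃,b₃)`. -/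
abbrev CompP : DegComputad :=
  ⟨Fin 2 × Fin 3, Fin 2, fun _ => {((0 : Fin 2), (0 : Fin 3)), (0, 1)}, fun _ => {(1, 2)}⟩

/-- The quotient morphism `A × B ⟶ P`. -/
def piP : CompAB ⟶ CompP := ⟨Prod.map ![0, 0, 1] id, id, by decide, by decide⟩

/-- The product `C × B`: 2-cells `(ā,bⱼ)`, `(a₃,bⱼ)` and exactly one 3-cell
`(f̄,g) : (ā,b₁)·(ā,b₂) → (a₃,b₃)`. -/
abbrev CompCB : DegComputad :=
  ⟨Fin 2 × Fin 3, Unit, fun _ => {((0 : Fin 2), (0 : Fin 3)), (0, 1)}, fun _ => {(1, 2)}⟩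

/-- The morphism `q × id_B : A × B ⟶ C × B`. -/
def muCB : CompAB ⟶ CompCB := ⟨Prod.map ![0, 0, 1] id, fun _ => (), by decide, by decide⟩

open CategoryTheory.Limits

-- Auxiliary lemmas ------------------------------------------------------

lemma pair_map_src {X : Type} {s : Multiset X} {u : X → Fin 2} {v : X → Fin 3}
    (h1 : Multiset.map u s = {0, 0}) (h2 : Multiset.map v s = {0, 1}) :
    Multiset.map (fun x => (u x, v x)) s = ({((0 : Fin 2), (0 : Fin 3)), (0, 1)} : Multiset (Fin 2 × Fin 3)) := by
  have hc : Multiset.card s = 2 := by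
    have := congrArg Multiset.card h1
    simpa using this
  obtain ⟨x, y, rfl⟩ := Multiset.card_eq_two.mp hc
  simp only [Multiset.insert_eq_cons, Multiset.map_cons, Multiset.map_singleton] at h1 h2 ⊢
  have hux : u x = 0 := by
    have hm : u x ∈ (u x ::ₘ {u y}) := Multiset.mem_cons_self _ _
    rw [h1] at hm; simpa using hm
  have huy : u y = 0 := by
    have hm : u y ∈ (u x ::ₘ {u y}) := Multiset.mem_cons_of_mem (Multiset.mem_singleton_self _)
    rw [h1] at hm; simpa using hm
  have hvx : v x = 0 ∨ v x = 1 := by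
    have hm : v x ∈ (v x ::ₘ {v y}) := Multiset.mem_cons_self _ _
    rw [h2] at hm; simpa using hm
  rcases hvx with hvx | hvx
  · have hvy : v y = 1 := by
      rw [hvx] at h2
      have := (Multiset.cons_inj_right (0 : Fin 3)).mp h2
      simpa using this
    rw [hux, huy, hvx, hvy]
  · have hvy : v y = 0 := by
      rw [hvx, show ((0 : Fin 3) ::ₘ {1}) = (1 ::ₘ {0}) from Multiset.cons_swap _ _ _] at h2
      have := (Multiset.cons_inj_right (1 : Fin 3)).mp h2
      simpa using this
    rw [hux, huy, hvx, hvy]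
    exact Multiset.cons_swap _ _ _

lemma pair_map_tgt {X : Type} {s : Multiset X} {u : X → Fin 2} {v : X → Fin 3}
    (h1 : Multiset.map u s = {1}) (h2 : Multiset.map v s = {2}) :
    Multiset.map (fun x => (u x, v x)) s = ({((1 : Fin 2), (2 : Fin 3))} : Multiset (Fin 2 × Fin 3)) := by
  have hc : Multiset.card s = 1 := by
    have := congrArg Multiset.card h1
    simpa using this
  obtain ⟨x, rfl⟩ := Multiset.card_eq_one.mp hc
  simp only [Multiset.map_singleton] at h1 h2 ⊢
  have hux : u x = 1 := by simpa using h1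
  have hvx : v x = 2 := by simpa using h2
  rw [hux, hvx]

/-- surjectivity of the 2-cell part of `piP`. -/
lemma piP_f2_surj : Function.Surjective piP.f2 := by
  rintro ⟨i, j⟩
  fin_cases i
  · exact ⟨(0, j), rfl⟩
  · exact ⟨(2, j), rfl⟩


/-- descent morphism for the coequalizer `P`. -/
def descP {T : DegComputad} (k : CompAB ⟶ T) (hk : alpha1B ≫ k = alpha2B ≫ k) :
    CompP ⟶ T where
  f2 z := k.f2 (![0, 2] z.1, z.2)
  f3 := k.f3
  src_comm e := by
    have h11 : k.f2 ((0 : Fin 3), (1 : Fin 3)) = k.f2 (1, 1) := by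
      have := congrArg (fun (m : CompEB ⟶ T) => m.f2 ((0 : Fin 2), (1 : Fin 3))) hk
      simpa [alpha1B, alpha2B] using this
    have h00 : k.f2 ((0 : Fin 3), (0 : Fin 3)) = k.f2 (1, 0) := by
      have := congrArg (fun (m : CompEB ⟶ T) => m.f2 ((0 : Fin 2), (0 : Fin 3))) hk
      simpa [alpha1B, alpha2B] using this
    refine Eq.trans (k.src_comm e) ?_
    fin_cases e
    · simp [Multiset.insert_eq_cons, h00, h11]
    · simp [Multiset.insert_eq_cons, h00, h11]
  tgt_comm e := by
    refine Eq.trans (k.tgt_comm e) ?_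
    fin_cases e <;> simp

/-- `P` is the coequalizer of `α₁ × 1` and `α₂ × 1`, `C × B` (with the evident
projections) is the product of `C` and `B`, and the canonical comparison morphism
`P ⟶ C × B` (the unique morphism commuting with the quotient maps from `A × B`)
exists, is unique, and is not an isomorphism: it identifies the two distinct 3-cells
of `P`. -/
theorem stmt8 :
    (∃ w : alpha1B ≫ piP = alpha2B ≫ piP, Nonempty (IsColimit (Cofork.ofπ piP w))) ∧
    (∃ (p : CompCB ⟶ CompC) (q : CompCB ⟶ CompB),
      Nonempty (IsLimit (BinaryFan.mk p q))) ∧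
    (∃! h : CompP ⟶ CompCB, piP ≫ h = muCB) ∧
    (∀ h : CompP ⟶ CompCB, piP ≫ h = muCB →
      ¬ IsIso h ∧ ∃ e₁ e₂ : CompP.C3, e₁ ≠ e₂ ∧ h.f3 e₁ = h.f3 e₂) := by
  constructor
  · -- coequalizer part
    have w : alpha1B ≫ piP = alpha2B ≫ piP := by
      apply DegComputad.Hom.ext
      · funext x; revert x; decide
      · funext e; exact e.elim
    refine ⟨w, ⟨Cofork.IsColimit.mk _ (fun s => ?_) (fun s => ?_) (fun s m hm => ?_)⟩⟩
    · exact descP s.π s.condition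
    · -- fac
      have hcond := s.condition
      apply DegComputad.Hom.ext
      · funext z
        obtain ⟨i, j⟩ := z
        fin_cases i
        · rfl
        · show s.π.f2 (0, j) = s.π.f2 (1, j)
          have := congrArg (fun (k : CompEB ⟶ s.pt) => k.f2 ((0 : Fin 2), j)) hcond
          simpa [alpha1B, alpha2B] using this
        · rfl
      · rfl
    · -- uniq
      have hcond := s.condition
      have h2 := congrArg DegComputad.Hom.f2 hm
      have h3 := congrArg DegComputad.Hom.f3 hm
      apply DegComputad.Hom.ext
      · funext z
        obtain ⟨zz, rfl⟩ := piP_f2_surj z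
        have hz : m.f2 (piP.f2 zz) = s.π.f2 zz := congrFun h2 zz
        refine hz.trans ?_
        obtain ⟨i, j⟩ := zz
        fin_cases i
        · rfl
        · show s.π.f2 (1, j) = s.π.f2 (0, j)
          have := congrArg (fun (k : CompEB ⟶ s.pt) => k.f2 ((0 : Fin 2), j)) hcond
          have h' : s.π.f2 ((0 : Fin 3), j) = s.π.f2 (1, j) := by
            simpa [alpha1B, alpha2B] using this
          exact h'.symm
        · rfl
      · funext e
        exact congrFun h3 e
  constructor
  · -- product part
    refine ⟨⟨Prod.fst, fun _ => (), by decide, by decide⟩,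
           ⟨Prod.snd, fun _ => (), by decide, by decide⟩, ⟨?_⟩⟩
    refine BinaryFan.IsLimit.mk _
      (fun {T} f g => ⟨fun x => (f.f2 x, g.f2 x), fun _ => (),
        fun e => (pair_map_src (f.src_comm e).symm (g.src_comm e).symm).symm,
        fun e => (pair_map_tgt (f.tgt_comm e).symm (g.tgt_comm e).symm).symm⟩)
      (fun f g => ?_) (fun f g => ?_) (fun f g m h1 h2 => ?_)
    · apply DegComputad.Hom.ext
      · rfl
      · funext e; rfl
    · apply DegComputad.Hom.ext
      · rfl
      · funext e; rfl
    · apply DegComputad.Hom.ext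
      · funext x
        have e1 := congrFun (congrArg DegComputad.Hom.f2 h1) x
        have e2 := congrFun (congrArg DegComputad.Hom.f2 h2) x
        exact Prod.ext e1 e2
      · funext e; rfl
  constructor
  · -- unique comparison morphism
    refine ⟨⟨id, fun _ => (), by decide, by decide⟩, ?_, ?_⟩
    · apply DegComputad.Hom.ext
      · rfl
      · rfl
    · intro h hh
      apply DegComputad.Hom.ext
      · funext z
        obtain ⟨zz, rfl⟩ := piP_f2_surj z
        exact congrFun (congrArg DegComputad.Hom.f2 hh) zz
      · funext e; rfl
  · -- not iso
    intro h _
    refine ⟨?_, 0, 1, by decide, rfl⟩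
    intro hiso
    have hinj : Function.Injective h.f3 := by
      intro a b hab
      have ha := congrFun (congrArg DegComputad.Hom.f3 (IsIso.hom_inv_id h)) a
      have hb := congrFun (congrArg DegComputad.Hom.f3 (IsIso.hom_inv_id h)) b
      simp only [DegComputad.comp_f3, DegComputad.id_f3, Function.comp, id] at ha hb
      rw [← ha, ← hb, hab]
    have : (0 : Fin 2) = 1 := hinj rfl
    exact absurd this (by decide)
end
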